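/- Let 1 ≤ k ≤ m, suppose every edge of G is contained in at most Δ_E triangles with Δ_E ≥ 1, let p = 1/√(km) and q = √(k/m), let (g_v)_{v ∈ V} be independent Bernoulli(p) and (h_{(u,v)})_{(u,v) ∈ V × V} be independent Bernoulli(q) random variables, jointly independent, and let X = Σ_{(u,v,w) canonically ordered triangle} t^{>k}_{uvw} · g_u · h_{(u,v)} · h_{(u,w)}. Then Var(X) ≤ 4 (√k / m^{3/2}) Δ_E T^{>k}. -/

import Mathlib

open MeasureTheory ProbabilityTheory

/-- The (0-indexed) position of the edge `e` in the stream `σ`; junk value `0` if `e` does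
not occur.  When `σ` is injective this is the unique `i` with `σ i = e`. -/
noncomputable def pos {V : Type*} [DecidableEq V] {m : ℕ} (σ : Fin m → Sym2 V) (e : Sym2 V) : ℕ :=
  if h : ∃ i, σ i = e then (h.choose : ℕ) else 0

/-- `degb σ u v w` is the number of edges incident to `v` arriving strictly between the
edges `uv` and `vw` in the stream `σ`. -/
noncomputable def degb {V : Type*} [DecidableEq V] {m : ℕ}
    (σ : Fin m → Sym2 V) (u v w : V) : ℕ :=
  (Finset.univ.filter (fun t : Fin m =>
    pos σ s(u, v) < (t : ℕ) ∧ (t : ℕ) < pos σ s(v, w) ∧ v ∈ σ t)).card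

/-- The degree of the vertex `v` in the streamed graph: the number of stream edges
incident to `v`. -/
def vdeg {V : Type*} [DecidableEq V] {m : ℕ} (σ : Fin m → Sym2 V) (v : V) : ℕ :=
  (Finset.univ.filter (fun t : Fin m => v ∈ σ t)).card

/-- `(u, v, w)` is a canonically ordered triangle of the streamed graph if the edges
`uv`, `uw`, `vw` all occur in the stream and `uv ≼ uw ≼ vw`. -/
def IsCanonTri {V : Type*} [DecidableEq V] {m : ℕ} (σ : Fin m → Sym2 V) (u v w : V) : Prop :=
  s(u, v) ∈ Set.range σ ∧ s(u, w) ∈ Set.range σ ∧ s(v, w) ∈ Set.range σ ∧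
    pos σ s(u, v) ≤ pos σ s(u, w) ∧ pos σ s(u, w) ≤ pos σ s(v, w)

open scoped Classical in
/-- `t^{<k}_{uvw}`: the weight `(1 − 1/k)^{degb(uvw) + degb(uwv)}` if `(u,v,w)` is a
canonically ordered triangle, and `0` otherwise. -/
noncomputable def tlt {V : Type*} [DecidableEq V] {m : ℕ} (σ : Fin m → Sym2 V) (k : ℝ)
    (u v w : V) : ℝ :=
  if IsCanonTri σ u v w then (1 - 1 / k) ^ (degb σ u v w + degb σ u w v) else 0

open scoped Classical in
/-- `t^{>k}_{uvw}`: the weight `1 − (1 − 1/k)^{degb(uvw) + degb(uwv)}` if `(u,v,w)` is a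
canonically ordered triangle, and `0` otherwise. -/
noncomputable def tgt {V : Type*} [DecidableEq V] {m : ℕ} (σ : Fin m → Sym2 V) (k : ℝ)
    (u v w : V) : ℝ :=
  if IsCanonTri σ u v w then 1 - (1 - 1 / k) ^ (degb σ u v w + degb σ u w v) else 0
open MeasureTheory ProbabilityTheory Finset

open scoped Classical

section AuxComb

variable {V : Type*} [Fintype V] [DecidableEq V] {m : ℕ} {σ : Fin m → Sym2 V}

lemma my_prod01 {ι : Type*} [DecidableEq ι] {f : ι → ℝ} (hf : ∀ i, f i = 0 ∨ f i = 1)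
    (S₁ S₂ : Finset ι) :
    (∏ i ∈ S₁, f i) * ∏ i ∈ S₂, f i = ∏ i ∈ S₁ ∪ S₂, f i := by
  by_cases h0 : ∃ i ∈ S₁ ∩ S₂, f i = 0
  · obtain ⟨i, hi, hfi⟩ := h0
    rw [Finset.mem_inter] at hi
    rw [Finset.prod_eq_zero hi.1 hfi, Finset.prod_eq_zero (Finset.mem_union_left _ hi.1) hfi,
      zero_mul]
  · have h1 : ∏ i ∈ S₁ ∩ S₂, f i = 1 :=
      Finset.prod_eq_one fun i hi => (hf i).resolve_left fun hz => h0 ⟨i, hi, hz⟩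
    rw [← Finset.prod_union_inter, h1, mul_one]

lemma my_prod01mem {ι : Type*} {f : ι → ℝ} (S : Finset ι) (hf : ∀ i, f i = 0 ∨ f i = 1) :
    (∏ i ∈ S, f i) = 0 ∨ (∏ i ∈ S, f i) = 1 := by
  refine Finset.prod_induction f (fun x => x = 0 ∨ x = 1) ?_ (Or.inr rfl) (fun i _ => hf i)
  rintro a b (rfl | rfl) (rfl | rfl) <;> simp

lemma my_bernoulli {k : ℝ} (hk : 1 ≤ k) (n : ℕ) : 1 - (1 - 1 / k) ^ n ≤ n / k := by
  have hk0 : (0 : ℝ) < k := lt_of_lt_of_le one_pos hk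
  have h1 : (1 : ℝ) / k ≤ 1 := (div_le_one hk0).mpr hk
  have h2 : (0 : ℝ) ≤ 1 / k := by positivity
  have h3 := one_add_mul_le_pow (a := -(1 / k)) (by linarith) n
  have e1 : 1 + (n : ℝ) * -(1 / k) = 1 - n * (1 / k) := by ring
  have e2 : (1 : ℝ) + -(1 / k) = 1 - 1 / k := by ring
  rw [e1, e2] at h3
  have : (n : ℝ) * (1 / k) = n / k := by ring
  linarith [h3, this.symm.le]

lemma my_pos_inj (hinj : Function.Injective σ) {e e' : Sym2 V}
    (he : e ∈ Set.range σ) (he' : e' ∈ Set.range σ) (hp : pos σ e = pos σ e') : e = e' := by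
  obtain ⟨i, hi⟩ := he; obtain ⟨j, hj⟩ := he'
  have h1 : ∃ i, σ i = e := ⟨i, hi⟩
  have h2 : ∃ i, σ i = e' := ⟨j, hj⟩
  rw [pos, dif_pos h1, pos, dif_pos h2] at hp
  have h3 : h1.choose = h2.choose := Fin.ext hp
  rw [← h1.choose_spec, ← h2.choose_spec, h3]

lemma my_not_both (hinj : Function.Injective σ) (hsimple : ∀ t, ¬(σ t).IsDiag) {u a b : V}
    (h1 : IsCanonTri σ u a b) (h2 : IsCanonTri σ u b a) : False := by
  obtain ⟨ha1, ha2, ha3, ha4, _⟩ := h1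
  obtain ⟨_, _, _, hb4, _⟩ := h2
  have hposeq : pos σ s(u, a) = pos σ s(u, b) := le_antisymm ha4 hb4
  have heq : s(u, a) = s(u, b) := my_pos_inj hinj ha1 ha2 hposeq
  have hab : a = b := by
    rw [Sym2.eq_iff] at heq
    rcases heq with ⟨_, h⟩ | ⟨h1', h2'⟩
    · exact h
    · rw [← h1', h2']
  obtain ⟨t, ht⟩ := ha3
  exact hsimple t (by rw [ht, hab]; exact Sym2.mk_isDiag_iff.mpr rfl)

lemma my_canon_ne (hsimple : ∀ t, ¬(σ t).IsDiag) {u v w : V}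
    (hT : IsCanonTri σ u v w) : v ≠ w := by
  obtain ⟨t, ht⟩ := hT.2.2.1
  intro hvw
  exact hsimple t (by rw [ht, hvw]; exact Sym2.mk_isDiag_iff.mpr rfl)

lemma my_count_common {ΔE : ℕ}
    (hΔE : ∀ x y : V, s(x, y) ∈ Set.range σ →
      Nat.card {z : V // s(x, z) ∈ Set.range σ ∧ s(y, z) ∈ Set.range σ} ≤ ΔE)
    {u x : V} (hux : s(u, x) ∈ Set.range σ) :
    (Finset.univ.filter fun z : V => s(u, z) ∈ Set.range σ ∧ s(x, z) ∈ Set.range σ).card ≤ ΔE := by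
  have h := hΔE u x hux
  rwa [Nat.card_eq_fintype_card, Fintype.card_subtype] at h

lemma my_count_slot {ΔE : ℕ}
    (hΔE : ∀ x y : V, s(x, y) ∈ Set.range σ →
      Nat.card {z : V // s(x, z) ∈ Set.range σ ∧ s(y, z) ∈ Set.range σ} ≤ ΔE)
    (u a : V) :
    (Finset.univ.filter fun xz : V × V => xz.1 = a ∧ s(u, xz.1) ∈ Set.range σ ∧
      s(u, xz.2) ∈ Set.range σ ∧ s(xz.1, xz.2) ∈ Set.range σ).card ≤ ΔE := by
  rcases Finset.eq_empty_or_nonempty (Finset.univ.filter fun xz : V × V => xz.1 = a ∧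
      s(u, xz.1) ∈ Set.range σ ∧ s(u, xz.2) ∈ Set.range σ ∧
      s(xz.1, xz.2) ∈ Set.range σ) with he | hne
  · rw [he]; simp
  · obtain ⟨⟨x0, z0⟩, hx0⟩ := hne
    obtain ⟨-, h1, h2, -, -⟩ := Finset.mem_filter.mp hx0
    have hua : s(u, a) ∈ Set.range σ := h1 ▸ h2
    refine le_trans (Finset.card_le_card_of_injOn (fun xz => xz.2) ?_ ?_)
      (my_count_common hΔE hua)
    · rintro ⟨x, z⟩ hx
      obtain ⟨-, rfl, -, h3, h4⟩ := Finset.mem_filter.mp hx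
      exact Finset.mem_filter.mpr ⟨Finset.mem_univ _, h3, h4⟩
    · rintro ⟨x, z⟩ hx ⟨x', z'⟩ hx' hzz
      simp only [Finset.coe_filter, Set.mem_setOf_eq] at hx hx'
      simp only at hzz
      exact Prod.ext (hx.2.1.trans hx'.2.1.symm) hzz

end AuxComb
section AuxCount

variable {V : Type*} [Fintype V] [DecidableEq V] {m : ℕ} {σ : Fin m → Sym2 V}

/-- Per-stream-position count: at most `2 ΔE` canonical triangles with apex `u` have the
edge at position `t` counted in `degb(uvw)` or `degb(uwv)`. -/
lemma my_countC3 (hinj : Function.Injective σ) (hsimple : ∀ t, ¬(σ t).IsDiag) {ΔE : ℕ}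
    (hΔE : ∀ x y : V, s(x, y) ∈ Set.range σ →
      Nat.card {z : V // s(x, z) ∈ Set.range σ ∧ s(y, z) ∈ Set.range σ} ≤ ΔE)
    (u : V) (t : Fin m) :
    (Finset.univ.filter fun vw : V × V => IsCanonTri σ u vw.1 vw.2 ∧
        (pos σ s(u, vw.1) < (t : ℕ) ∧ (t : ℕ) < pos σ s(vw.1, vw.2) ∧ vw.1 ∈ σ t)).card +
    (Finset.univ.filter fun vw : V × V => IsCanonTri σ u vw.1 vw.2 ∧
        (pos σ s(u, vw.2) < (t : ℕ) ∧ (t : ℕ) < pos σ s(vw.2, vw.1) ∧ vw.2 ∈ σ t)).card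
      ≤ 2 * ΔE := by
  set P₁ := Finset.univ.filter fun vw : V × V => IsCanonTri σ u vw.1 vw.2 ∧
      (pos σ s(u, vw.1) < (t : ℕ) ∧ (t : ℕ) < pos σ s(vw.1, vw.2) ∧ vw.1 ∈ σ t) with hP₁
  set P₂ := Finset.univ.filter fun vw : V × V => IsCanonTri σ u vw.1 vw.2 ∧
      (pos σ s(u, vw.2) < (t : ℕ) ∧ (t : ℕ) < pos σ s(vw.2, vw.1) ∧ vw.2 ∈ σ t) with hP₂
  set Tfin := Finset.univ.filter fun xz : V × V => xz.1 ∈ σ t ∧ s(u, xz.1) ∈ Set.range σ ∧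
      s(u, xz.2) ∈ Set.range σ ∧ s(xz.1, xz.2) ∈ Set.range σ with hTfin
  -- step 1 : P₁ and the swap of P₂ are disjoint subsets of Tfin
  have hsub1 : P₁ ⊆ Tfin := by
    rintro ⟨v, w⟩ hx
    obtain ⟨-, hc, -, -, hmem⟩ := Finset.mem_filter.mp hx
    exact Finset.mem_filter.mpr ⟨Finset.mem_univ _, hmem, hc.1, hc.2.1, hc.2.2.1⟩
  have hsub2 : P₂.image Prod.swap ⊆ Tfin := by
    rintro ⟨x, z⟩ hx
    obtain ⟨⟨v, w⟩, hvw, hswap⟩ := Finset.mem_image.mp hx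
    obtain ⟨-, hc, -, -, hmem⟩ := Finset.mem_filter.mp hvw
    rw [Prod.swap_prod_mk, Prod.mk.injEq] at hswap
    obtain ⟨rfl, rfl⟩ := hswap
    refine Finset.mem_filter.mpr ⟨Finset.mem_univ _, hmem, hc.2.1, hc.1, ?_⟩
    rw [Sym2.eq_swap]; exact hc.2.2.1
  have hdisj : Disjoint P₁ (P₂.image Prod.swap) := by
    rw [Finset.disjoint_left]
    rintro ⟨v, w⟩ hx hy
    obtain ⟨-, hc, -⟩ := Finset.mem_filter.mp hx
    obtain ⟨⟨v', w'⟩, hvw', hswap⟩ := Finset.mem_image.mp hy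
    obtain ⟨-, hc', -⟩ := Finset.mem_filter.mp hvw'
    rw [Prod.swap_prod_mk, Prod.mk.injEq] at hswap
    obtain ⟨rfl, rfl⟩ := hswap
    exact my_not_both hinj hsimple hc' hc
  have hcards : P₁.card + P₂.card ≤ Tfin.card := by
    rw [← Finset.card_image_of_injective P₂ Prod.swap_injective,
      ← Finset.card_union_of_disjoint hdisj]
    exact Finset.card_le_card (Finset.union_subset hsub1 hsub2)
  refine hcards.trans ?_
  -- step 2 : Tfin has at most 2 ΔE elements
  obtain ⟨a, b, hab⟩ : ∃ a b, σ t = s(a, b) := Sym2.ind (fun a b => ⟨a, b, rfl⟩) (σ t)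
  have hsub : Tfin ⊆
      (Finset.univ.filter fun xz : V × V => xz.1 = a ∧ s(u, xz.1) ∈ Set.range σ ∧
        s(u, xz.2) ∈ Set.range σ ∧ s(xz.1, xz.2) ∈ Set.range σ) ∪
      (Finset.univ.filter fun xz : V × V => xz.1 = b ∧ s(u, xz.1) ∈ Set.range σ ∧
        s(u, xz.2) ∈ Set.range σ ∧ s(xz.1, xz.2) ∈ Set.range σ) := by
    rintro ⟨x, z⟩ hx
    obtain ⟨-, hmem, h2, h3, h4⟩ := Finset.mem_filter.mp hx
    rw [hab, Sym2.mem_iff] at hmem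
    rcases hmem with rfl | rfl
    · exact Finset.mem_union_left _ (Finset.mem_filter.mpr ⟨Finset.mem_univ _, rfl, h2, h3, h4⟩)
    · exact Finset.mem_union_right _ (Finset.mem_filter.mpr ⟨Finset.mem_univ _, rfl, h2, h3, h4⟩)
  calc Tfin.card ≤ _ := Finset.card_le_card hsub
    _ ≤ _ + _ := Finset.card_union_le _ _
    _ ≤ ΔE + ΔE := Nat.add_le_add (my_count_slot hΔE u a) (my_count_slot hΔE u b)
    _ = 2 * ΔE := (two_mul ΔE).symm

/-- The number of canonical triangles with apex `u` sharing one of the two apex edges of a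
given canonical triangle `(u,v,w)` is at most `2 ΔE`. -/
lemma my_countC1 (hinj : Function.Injective σ) (hsimple : ∀ t, ¬(σ t).IsDiag) {ΔE : ℕ}
    (hΔE : ∀ x y : V, s(x, y) ∈ Set.range σ →
      Nat.card {z : V // s(x, z) ∈ Set.range σ ∧ s(y, z) ∈ Set.range σ} ≤ ΔE)
    {u v w : V} (hT : IsCanonTri σ u v w) :
    (Finset.univ.filter fun vw' : V × V => IsCanonTri σ u vw'.1 vw'.2 ∧
      (vw'.1 = v ∨ vw'.1 = w ∨ vw'.2 = v ∨ vw'.2 = w)).card ≤ 2 * ΔE := by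
  set Tgt := (Finset.univ.filter fun xz : V × V => (xz.1 = v ∨ xz.1 = w) ∧
      s(u, xz.1) ∈ Set.range σ ∧ s(u, xz.2) ∈ Set.range σ ∧
      s(xz.1, xz.2) ∈ Set.range σ) with hTgt
  have hstep : (Finset.univ.filter fun vw' : V × V => IsCanonTri σ u vw'.1 vw'.2 ∧
      (vw'.1 = v ∨ vw'.1 = w ∨ vw'.2 = v ∨ vw'.2 = w)).card ≤ Tgt.card := by
    refine Finset.card_le_card_of_injOn
      (fun vw' => if vw'.1 = v ∨ vw'.1 = w then vw' else vw'.swap) ?_ ?_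
    · rintro ⟨v', w'⟩ hx
      obtain ⟨-, hc, hor⟩ := Finset.mem_filter.mp hx
      by_cases hcond : v' = v ∨ v' = w
      · simp only [hcond, if_true]
        exact Finset.mem_filter.mpr ⟨Finset.mem_univ _, hcond, hc.1, hc.2.1, hc.2.2.1⟩
      · simp only [hcond, if_false]
        have hw' : w' = v ∨ w' = w := by tauto
        refine Finset.mem_filter.mpr ⟨Finset.mem_univ _, hw', hc.2.1, hc.1, ?_⟩
        rw [Sym2.eq_swap]; exact hc.2.2.1
    · rintro ⟨v₁, w₁⟩ hx₁ ⟨v₂, w₂⟩ hx₂ heq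
      rw [Finset.mem_coe, Finset.mem_filter] at hx₁ hx₂
      obtain ⟨-, hcan₁, -⟩ := hx₁
      obtain ⟨-, hcan₂, -⟩ := hx₂
      by_cases hc₁ : v₁ = v ∨ v₁ = w <;> by_cases hc₂ : v₂ = v ∨ v₂ = w <;>
        simp only [hc₁, hc₂, if_true, if_false, Prod.swap_prod_mk, Prod.mk.injEq] at heq <;>
        obtain ⟨h1, h2⟩ := heq
      · exact Prod.ext h1 h2
      · have hcc : IsCanonTri σ u w₁ v₁ := by rw [h2, h1]; exact hcan₂
        exact (my_not_both hinj hsimple hcan₁ hcc).elim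
      · have hcc : IsCanonTri σ u w₂ v₂ := by rw [← h2, ← h1]; exact hcan₁
        exact (my_not_both hinj hsimple hcan₂ hcc).elim
      · exact Prod.ext h2 h1
  refine hstep.trans ?_
  have hsub : Tgt ⊆
      (Finset.univ.filter fun xz : V × V => xz.1 = v ∧ s(u, xz.1) ∈ Set.range σ ∧
        s(u, xz.2) ∈ Set.range σ ∧ s(xz.1, xz.2) ∈ Set.range σ) ∪
      (Finset.univ.filter fun xz : V × V => xz.1 = w ∧ s(u, xz.1) ∈ Set.range σ ∧
        s(u, xz.2) ∈ Set.range σ ∧ s(xz.1, xz.2) ∈ Set.range σ) := by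
    rintro ⟨x, z⟩ hx
    obtain ⟨-, hor, h2, h3, h4⟩ := Finset.mem_filter.mp hx
    rcases hor with rfl | rfl
    · exact Finset.mem_union_left _ (Finset.mem_filter.mpr ⟨Finset.mem_univ _, rfl, h2, h3, h4⟩)
    · exact Finset.mem_union_right _ (Finset.mem_filter.mpr ⟨Finset.mem_univ _, rfl, h2, h3, h4⟩)
  calc Tgt.card ≤ _ := Finset.card_le_card hsub
    _ ≤ _ + _ := Finset.card_union_le _ _
    _ ≤ ΔE + ΔE := Nat.add_le_add (my_count_slot hΔE u v) (my_count_slot hΔE u w)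
    _ = 2 * ΔE := (two_mul ΔE).symm

/-- Weighted count of canonical triangles at an apex. -/
lemma my_countC2 (hinj : Function.Injective σ) (hsimple : ∀ t, ¬(σ t).IsDiag) {ΔE : ℕ}
    (hΔE : ∀ x y : V, s(x, y) ∈ Set.range σ →
      Nat.card {z : V // s(x, z) ∈ Set.range σ ∧ s(y, z) ∈ Set.range σ} ≤ ΔE)
    (u : V) :
    ∑ vw : V × V, (if IsCanonTri σ u vw.1 vw.2 then
        degb σ u vw.1 vw.2 + degb σ u vw.2 vw.1 else 0) ≤ 2 * m * ΔE := by
  calc ∑ vw : V × V, (if IsCanonTri σ u vw.1 vw.2 then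
        degb σ u vw.1 vw.2 + degb σ u vw.2 vw.1 else 0)
      = ∑ vw ∈ Finset.univ.filter (fun vw : V × V => IsCanonTri σ u vw.1 vw.2),
          ∑ t : Fin m,
          ((if pos σ s(u, vw.1) < (t : ℕ) ∧ (t : ℕ) < pos σ s(vw.1, vw.2) ∧ vw.1 ∈ σ t
              then 1 else 0) +
            if pos σ s(u, vw.2) < (t : ℕ) ∧ (t : ℕ) < pos σ s(vw.2, vw.1) ∧ vw.2 ∈ σ t
              then 1 else 0) := by
        rw [← Finset.sum_filter]
        simp only [degb, Finset.card_filter, ← Finset.sum_add_distrib]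
    _ = ∑ t : Fin m, ∑ vw ∈ Finset.univ.filter (fun vw : V × V => IsCanonTri σ u vw.1 vw.2),
          ((if pos σ s(u, vw.1) < (t : ℕ) ∧ (t : ℕ) < pos σ s(vw.1, vw.2) ∧ vw.1 ∈ σ t
              then 1 else 0) +
            if pos σ s(u, vw.2) < (t : ℕ) ∧ (t : ℕ) < pos σ s(vw.2, vw.1) ∧ vw.2 ∈ σ t
              then 1 else 0) := Finset.sum_comm
    _ = ∑ t : Fin m,
        ((Finset.univ.filter fun vw : V × V => IsCanonTri σ u vw.1 vw.2 ∧
          (pos σ s(u, vw.1) < (t : ℕ) ∧ (t : ℕ) < pos σ s(vw.1, vw.2) ∧ vw.1 ∈ σ t)).card +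
        (Finset.univ.filter fun vw : V × V => IsCanonTri σ u vw.1 vw.2 ∧
          (pos σ s(u, vw.2) < (t : ℕ) ∧ (t : ℕ) < pos σ s(vw.2, vw.1) ∧ vw.2 ∈ σ t)).card) := by
        refine Finset.sum_congr rfl fun t _ => ?_
        rw [Finset.sum_add_distrib, ← Finset.card_filter, ← Finset.card_filter,
          Finset.filter_filter, Finset.filter_filter]
    _ ≤ ∑ _t : Fin m, 2 * ΔE :=
        Finset.sum_le_sum fun t _ => my_countC3 hinj hsimple hΔE u t
    _ = 2 * m * ΔE := by simp [Finset.sum_const, Finset.card_univ]; ring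

end AuxCount

/-- With `1 ≤ k ≤ m`, every edge in at most `Δ_E ≥ 1` triangles, `p = 1/√(km)`,
`q = √(k/m)`, and jointly independent Bernoulli(p) variables `g_v` and Bernoulli(q)
variables `h_{(u,v)}`, the estimator
`X = Σ_{(u,v,w)} t^{>k}_{uvw} g_u h_{(u,v)} h_{(u,w)}` satisfies
`Var(X) ≤ 4 (√k / m^{3/2}) Δ_E T^{>k}`. -/
theorem stmt_14 {V : Type*} [Fintype V] [DecidableEq V] {m : ℕ} (hm : 1 ≤ m)
    (σ : Fin m → Sym2 V)
    (hinj : Function.Injective σ) (hsimple : ∀ t, ¬(σ t).IsDiag)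
    (k : ℝ) (hk : 1 ≤ k) (hkm : k ≤ m)
    (ΔE : ℕ) (hΔE1 : 1 ≤ ΔE)
    (hΔE : ∀ x y : V, s(x, y) ∈ Set.range σ →
      Nat.card {z : V // s(x, z) ∈ Set.range σ ∧ s(y, z) ∈ Set.range σ} ≤ ΔE)
    {Ω : Type*} [MeasurableSpace Ω] (μ : Measure Ω) [IsProbabilityMeasure μ]
    (p q : ℝ) (hp : p = (Real.sqrt (k * m))⁻¹) (hq : q = Real.sqrt (k / m))
    (g : V → Ω → ℝ) (h : V × V → Ω → ℝ)
    (hgval : ∀ v ω, g v ω = 0 ∨ g v ω = 1)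
    (hhval : ∀ d ω, h d ω = 0 ∨ h d ω = 1)
    (hgmeas : ∀ v, Measurable (g v)) (hhmeas : ∀ d, Measurable (h d))
    (hindep : iIndepFun (Sum.elim g h) μ)
    (hgp : ∀ v : V, μ {ω | g v ω = 1} = ENNReal.ofReal p)
    (hhq : ∀ d : V × V, μ {ω | h d ω = 1} = ENNReal.ofReal q)
    (X : Ω → ℝ)
    (hX : ∀ ω, X ω = ∑ u : V, ∑ v : V, ∑ w : V,
      tgt σ k u v w * g u ω * h (u, v) ω * h (u, w) ω) :
    variance X μ ≤
      4 * (Real.sqrt k / (m : ℝ) ^ (3 / 2 : ℝ)) * ΔE *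
        (∑ u : V, ∑ v : V, ∑ w : V, tgt σ k u v w) := by

  classical
  have hm' : (0 : ℝ) < m := by exact_mod_cast Nat.lt_of_lt_of_le Nat.zero_lt_one hm
  have hk0 : (0 : ℝ) < k := lt_of_lt_of_le one_pos hk
  have hq0 : 0 ≤ q := hq ▸ Real.sqrt_nonneg _
  have hp0 : 0 ≤ p := hp ▸ inv_nonneg.mpr (Real.sqrt_nonneg _)
  have hq1 : q ≤ 1 := by
    rw [hq, show (1 : ℝ) = Real.sqrt 1 by simp]
    exact Real.sqrt_le_sqrt ((div_le_one hm').mpr hkm)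
  have hq2 : q ^ 2 = k / m := by rw [hq, Real.sq_sqrt (by positivity)]
  -- the family of Bernoulli variables
  set Z : V ⊕ V × V → Ω → ℝ := Sum.elim g h with hZ
  set e : V ⊕ V × V → ℝ := Sum.elim (fun _ => p) (fun _ => q) with hedef
  have hZval : ∀ i ω, Z i ω = 0 ∨ Z i ω = 1 := by
    rintro (v | d) ω
    exacts [hgval v ω, hhval d ω]
  have hZmeas : ∀ i, Measurable (Z i) := by
    rintro (v | d)
    exacts [hgmeas v, hhmeas d]
  have key01 : ∀ (f : Ω → ℝ), Measurable f → (∀ ω, f ω = 0 ∨ f ω = 1) → ∀ r : ℝ, 0 ≤ r →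
      μ {ω | f ω = 1} = ENNReal.ofReal r → ∫ ω, f ω ∂μ = r := by
    intro f hf hval r hr hμr
    have hfi : f = Set.indicator {ω | f ω = 1} (fun _ => (1 : ℝ)) := by
      funext ω
      rcases hval ω with h0 | h1
      · rw [Set.indicator_of_notMem, h0]
        simp only [Set.mem_setOf_eq, h0]
        norm_num
      · rw [Set.indicator_of_mem, h1]
        exact h1
    have hms : MeasurableSet {ω | f ω = 1} := hf (measurableSet_singleton 1)
    rw [hfi, integral_indicator_const (1 : ℝ) hms, measureReal_def, hμr, ENNReal.toReal_ofReal hr, smul_eq_mul,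
      mul_one]
  have hZint : ∀ i, ∫ ω, Z i ω ∂μ = e i := by
    rintro (v | d)
    · exact key01 _ (hgmeas v) (hgval v) p hp0 (hgp v)
    · exact key01 _ (hhmeas d) (hhval d) q hq0 (hhq d)
  have hprod_meas : ∀ S : Finset (V ⊕ V × V), Measurable (fun ω => ∏ i ∈ S, Z i ω) :=
    fun S => Finset.measurable_prod S fun i _ => hZmeas i
  have hprod_val : ∀ (S : Finset (V ⊕ V × V)) ω, (∏ i ∈ S, Z i ω) = 0 ∨ (∏ i ∈ S, Z i ω) = 1 :=
    fun S ω => my_prod01mem S fun i => hZval i ω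
  have hprod_int : ∀ S : Finset (V ⊕ V × V), Integrable (fun ω => ∏ i ∈ S, Z i ω) μ := by
    intro S
    refine (integrable_const (1 : ℝ)).mono ((hprod_meas S).aestronglyMeasurable)
      (Filter.Eventually.of_forall fun ω => ?_)
    rcases hprod_val S ω with h' | h' <;> rw [h'] <;> simp
  have hE : ∀ S : Finset (V ⊕ V × V), ∫ ω, ∏ i ∈ S, Z i ω ∂μ = ∏ i ∈ S, e i := by
    intro S
    induction S using Finset.induction_on with
    | empty => simp
    | @insert a s hnot ih =>
      have hind : IndepFun (Z a) (∏ j ∈ s, Z j) μ :=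
        (hindep.indepFun_finsetProd_of_notMem hZmeas hnot).symm
      have h1 : (fun ω => ∏ i ∈ insert a s, Z i ω) = (Z a * ∏ j ∈ s, Z j) := by
        funext ω
        rw [Finset.prod_insert hnot, Pi.mul_apply, Finset.prod_apply]
      have h2 : (fun ω => ∏ i ∈ s, Z i ω) = (∏ j ∈ s, Z j) := by
        funext ω; rw [Finset.prod_apply]
      have h3 : integral μ (∏ j ∈ s, Z j) = ∏ i ∈ s, e i := by rw [← h2]; exact ih
      rw [h1, hind.integral_mul_eq_mul_integral (hZmeas a).aestronglyMeasurable
        ((hprod_meas s).aestronglyMeasurable.congr (by rw [h2])),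
        Finset.prod_insert hnot, h3, show integral μ (Z a) = e a from hZint a]
  -- the summands of the estimator
  set c : V × V × V → ℝ := fun T => tgt σ k T.1 T.2.1 T.2.2 with hcdef
  set HS : V × V × V → Finset (V × V) := fun T => {(T.1, T.2.1), (T.1, T.2.2)} with hHSdef
  set SS : V × V × V → Finset (V ⊕ V × V) :=
    fun T => insert (Sum.inl T.1) ((HS T).image Sum.inr) with hSSdef
  set Y : V × V × V → Ω → ℝ := fun T ω => ∏ i ∈ SS T, Z i ω with hYdef
  have hk1 : (0 : ℝ) ≤ 1 - 1 / k := by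
    have : (1 : ℝ) / k ≤ 1 := (div_le_one hk0).mpr hk
    linarith
  have hk2 : (1 : ℝ) - 1 / k ≤ 1 := by
    have : (0 : ℝ) ≤ 1 / k := by positivity
    linarith
  have hc0 : ∀ T, 0 ≤ c T := by
    intro T
    simp only [hcdef, tgt]
    split_ifs with hcan
    · have := pow_le_one₀ hk1 hk2 (n := degb σ T.1 T.2.1 T.2.2 + degb σ T.1 T.2.2 T.2.1)
      linarith
    · exact le_refl _
  have hc1 : ∀ T, c T ≤ 1 := by
    intro T
    simp only [hcdef, tgt]
    split_ifs with hcan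
    · have := pow_nonneg hk1 (degb σ T.1 T.2.1 T.2.2 + degb σ T.1 T.2.2 T.2.1)
      linarith
    · norm_num
  have hcn : ∀ T : V × V × V, ¬IsCanonTri σ T.1 T.2.1 T.2.2 → c T = 0 := by
    intro T hT
    simp only [hcdef, tgt, if_neg hT]
  -- rewrite X as a sum over ordered triples
  have hXeq : X = fun ω => ∑ T : V × V × V, c T * Y T ω := by
    funext ω
    rw [hX ω, Fintype.sum_prod_type]
    refine Finset.sum_congr rfl fun u _ => ?_
    rw [Fintype.sum_prod_type]
    refine Finset.sum_congr rfl fun v _ => Finset.sum_congr rfl fun w _ => ?_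
    simp only [hcdef, hYdef, hSSdef, hHSdef]
    rw [Finset.prod_insert (by simp)]
    rw [Finset.prod_image (by intro x _ y _ hxy; exact Sum.inr_injective hxy)]
    by_cases hvw : v = w
    · subst hvw
      rw [show ({(u, v), (u, v)} : Finset (V × V)) = {(u, v)} by
        rw [Finset.insert_eq_self]; exact Finset.mem_singleton_self _]
      rw [Finset.prod_singleton]
      show tgt σ k u v v * g u ω * h (u, v) ω * h (u, v) ω = tgt σ k u v v * (g u ω * h (u, v) ω)
      rcases hhval (u, v) ω with h0 | h0 <;> rw [h0] <;> ring
    · rw [Finset.prod_pair (by simp [hvw])]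
      show tgt σ k u v w * g u ω * h (u, v) ω * h (u, w) ω
        = tgt σ k u v w * (g u ω * (h (u, v) ω * h (u, w) ω))
      ring
  -- expectations of the products
  have hYmeas : ∀ T, Measurable (Y T) := fun T => hprod_meas _
  have hYval : ∀ T ω, Y T ω = 0 ∨ Y T ω = 1 := fun T ω => hprod_val _ ω
  have hEY : ∀ T, ∫ ω, Y T ω ∂μ = ∏ i ∈ SS T, e i := fun T => hE _
  have hYY : ∀ T T' ω, Y T ω * Y T' ω = ∏ i ∈ SS T ∪ SS T', Z i ω :=
    fun T T' ω => my_prod01 (fun i => hZval i ω) _ _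
  have hEYY : ∀ T T', ∫ ω, Y T ω * Y T' ω ∂μ = ∏ i ∈ SS T ∪ SS T', e i := by
    intro T T'
    rw [show (fun ω => Y T ω * Y T' ω) = fun ω => ∏ i ∈ SS T ∪ SS T', Z i ω from
      funext (hYY T T')]
    exact hE _
  -- X is square integrable
  have hXmeas : Measurable X := by
    rw [hXeq]
    exact Finset.measurable_sum _ fun T _ => (hYmeas T).const_mul (c T)
  have hXbd : ∀ ω, ‖X ω‖ ≤ ∑ T : V × V × V, c T := by
    intro ω
    rw [hXeq]
    refine le_trans (norm_sum_le _ _) (Finset.sum_le_sum fun T _ => ?_)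
    have hy1 : |Y T ω| ≤ 1 := by rcases hYval T ω with h' | h' <;> simp [h']
    calc ‖c T * Y T ω‖ = |c T| * |Y T ω| := abs_mul _ _
      _ ≤ c T * 1 := mul_le_mul (le_of_eq (abs_of_nonneg (hc0 T))) hy1 (abs_nonneg _) (hc0 T)
      _ = c T := mul_one _
  have hXmem : MemLp X 2 μ :=
    MemLp.of_bound hXmeas.aestronglyMeasurable _ (Filter.Eventually.of_forall hXbd)
  -- integrability of the individual summands
  have hint : ∀ T T' : V × V × V, Integrable (fun ω => c T * c T' * (Y T ω * Y T' ω)) μ := by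
    intro T T'
    have heq : (fun ω => c T * c T' * (Y T ω * Y T' ω))
        = fun ω => c T * c T' * ∏ i ∈ SS T ∪ SS T', Z i ω := by
      funext ω; rw [hYY]
    rw [heq]
    exact (hprod_int _).const_mul _
  -- expand the variance as a double sum
  have hIX : ∫ ω, X ω ∂μ = ∑ T : V × V × V, c T * ∏ i ∈ SS T, e i := by
    rw [hXeq, integral_finset_sum _ fun T _ => ((hprod_int (SS T)).const_mul (c T))]
    refine Finset.sum_congr rfl fun T _ => ?_
    rw [integral_const_mul, hEY T]
  have hIX2 : ∫ ω, (X ^ 2) ω ∂μ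
      = ∑ T : V × V × V, ∑ T' : V × V × V, c T * c T' * ∏ i ∈ SS T ∪ SS T', e i := by
    have hX2 : (X ^ 2) = fun ω => ∑ T : V × V × V, ∑ T' : V × V × V,
        c T * c T' * (Y T ω * Y T' ω) := by
      funext ω
      rw [Pi.pow_apply, hXeq, sq, Finset.sum_mul_sum]
      exact Finset.sum_congr rfl fun T _ => Finset.sum_congr rfl fun T' _ => by ring
    rw [hX2, integral_finset_sum _ fun T _ => integrable_finset_sum _ fun T' _ => hint T T']
    refine Finset.sum_congr rfl fun T _ => ?_
    rw [integral_finset_sum _ fun T' _ => hint T T']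
    refine Finset.sum_congr rfl fun T' _ => ?_
    have heq : (fun ω => c T * c T' * (Y T ω * Y T' ω))
        = fun ω => c T * c T' * ∏ i ∈ SS T ∪ SS T', Z i ω := by
      funext ω; rw [hYY]
    rw [heq, integral_const_mul, hE]
  rw [variance_eq_sub hXmem, hIX2, hIX, sq (∑ T : V × V × V, c T * ∏ i ∈ SS T, e i),
    Finset.sum_mul_sum]
  simp only [← Finset.sum_sub_distrib]
  -- facts about products of the expectation weights
  have hbase : ∀ (a : V) (A : Finset (V × V)),
      ∏ i ∈ insert (Sum.inl a) (A.image Sum.inr), e i = p * q ^ A.card := by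
    intro a A
    rw [Finset.prod_insert (by simp),
      Finset.prod_image (by intro x _ y _ hxy; exact Sum.inr_injective hxy)]
    simp only [hedef, Sum.elim_inl, Sum.elim_inr, Finset.prod_const]
  have hSSprod : ∀ T, ∏ i ∈ SS T, e i = p * q ^ (HS T).card := by
    intro T; simp only [hSSdef]; exact hbase _ _
  have hSSunion : ∀ T T' : V × V × V, T.1 = T'.1 →
      ∏ i ∈ SS T ∪ SS T', e i = p * q ^ (HS T ∪ HS T').card := by
    intro T T' h1
    have hset : SS T ∪ SS T' = insert (Sum.inl T.1) ((HS T ∪ HS T').image Sum.inr) := by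
      simp only [hSSdef, ← h1, Finset.image_union]
      ext i
      simp only [Finset.mem_union, Finset.mem_insert]
      tauto
    rw [hset]; exact hbase _ _
  have hSSnonneg : ∀ T, 0 ≤ ∏ i ∈ SS T, e i := by
    intro T; rw [hSSprod]; positivity
  have hmemSS : ∀ (T : V × V × V) i, i ∈ SS T → i = Sum.inl T.1 ∨ ∃ x : V, i = Sum.inr (T.1, x) := by
    intro T i hi
    simp only [hSSdef, hHSdef, Finset.mem_insert, Finset.mem_image, Finset.mem_singleton] at hi
    rcases hi with rfl | ⟨d, hd, rfl⟩
    · exact Or.inl rfl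
    · rcases hd with rfl | rfl
      · exact Or.inr ⟨T.2.1, rfl⟩
      · exact Or.inr ⟨T.2.2, rfl⟩
  have hD0 : ∀ T T' : V × V × V, T.1 ≠ T'.1 →
      ∏ i ∈ SS T ∪ SS T', e i = (∏ i ∈ SS T, e i) * ∏ i ∈ SS T', e i := by
    intro T T' hne
    refine Finset.prod_union ?_
    rw [Finset.disjoint_left]
    intro i hi hi'
    rcases hmemSS T i hi with h1 | ⟨x, h1⟩ <;> rcases hmemSS T' i hi' with h2 | ⟨x', h2⟩ <;>
      rw [h1] at h2
    · exact hne (Sum.inl_injective h2)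
    · exact Sum.inl_ne_inr h2
    · exact Sum.inr_ne_inl h2
    · have h3 : (T.1, x) = (T'.1, x') := Sum.inr_injective h2
      exact hne ((Prod.mk.injEq _ _ _ _).mp h3).1
  have hHScard : ∀ T : V × V × V, IsCanonTri σ T.1 T.2.1 T.2.2 → (HS T).card = 2 := by
    intro T hT
    have hne : T.2.1 ≠ T.2.2 := my_canon_ne hsimple hT
    simp only [hHSdef]
    rw [Finset.card_insert_of_notMem (by simp [hne]), Finset.card_singleton]
  have hDle2 : ∀ T T' : V × V × V, T.1 = T'.1 → IsCanonTri σ T.1 T.2.1 T.2.2 →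
      (∏ i ∈ SS T ∪ SS T', e i) - (∏ i ∈ SS T, e i) * ∏ i ∈ SS T', e i ≤ p * q ^ 2 := by
    intro T T' h1 hT
    have h3 : 2 ≤ (HS T ∪ HS T').card := by
      rw [← hHScard T hT]
      exact Finset.card_le_card Finset.subset_union_left
    have h4 : (0 : ℝ) ≤ (∏ i ∈ SS T, e i) * ∏ i ∈ SS T', e i :=
      mul_nonneg (hSSnonneg T) (hSSnonneg T')
    have h5 : p * q ^ (HS T ∪ HS T').card ≤ p * q ^ 2 :=
      mul_le_mul_of_nonneg_left (pow_le_pow_of_le_one hq0 hq1 h3) hp0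
    rw [hSSunion T T' h1]
    linarith
  have hDle4 : ∀ T T' : V × V × V, T.1 = T'.1 → IsCanonTri σ T.1 T.2.1 T.2.2 →
      IsCanonTri σ T'.1 T'.2.1 T'.2.2 →
      ¬(T'.2.1 = T.2.1 ∨ T'.2.1 = T.2.2 ∨ T'.2.2 = T.2.1 ∨ T'.2.2 = T.2.2) →
      (∏ i ∈ SS T ∪ SS T', e i) - (∏ i ∈ SS T, e i) * ∏ i ∈ SS T', e i ≤ p * q ^ 4 := by
    intro T T' h1 hT hT' hnsh
    push_neg at hnsh
    obtain ⟨hn1, hn2, hn3, hn4⟩ := hnsh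
    have hdisj : Disjoint (HS T) (HS T') := by
      rw [Finset.disjoint_left]
      intro d hd hd'
      simp only [hHSdef, Finset.mem_insert, Finset.mem_singleton] at hd hd'
      rcases hd with rfl | rfl <;> rcases hd' with h2 | h2
      · exact hn1 (congrArg Prod.snd h2).symm
      · exact hn3 (congrArg Prod.snd h2).symm
      · exact hn2 (congrArg Prod.snd h2).symm
      · exact hn4 (congrArg Prod.snd h2).symm
    have hcard : (HS T ∪ HS T').card = 4 := by
      rw [Finset.card_union_of_disjoint hdisj, hHScard T hT, hHScard T' hT']
    have h4 : (0 : ℝ) ≤ (∏ i ∈ SS T, e i) * ∏ i ∈ SS T', e i :=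
      mul_nonneg (hSSnonneg T) (hSSnonneg T')
    rw [hSSunion T T' h1, hcard]
    linarith
  -- the weighted number of canonical triangles at an apex
  have hTu : ∀ u : V, ∑ vw : V × V, tgt σ k u vw.1 vw.2 ≤ 2 * m * ΔE / k := by
    intro u
    have hnat := my_countC2 hinj hsimple hΔE u
    have step : ∀ vw : V × V, tgt σ k u vw.1 vw.2 ≤
        ((if IsCanonTri σ u vw.1 vw.2 then degb σ u vw.1 vw.2 + degb σ u vw.2 vw.1 else 0 :
          ℕ) : ℝ) / k := by
      intro vw
      by_cases hcan : IsCanonTri σ u vw.1 vw.2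
      · simp only [tgt, if_pos hcan]
        exact_mod_cast my_bernoulli hk _
      · simp only [tgt, if_neg hcan]
        simp
    calc ∑ vw : V × V, tgt σ k u vw.1 vw.2
        ≤ ∑ vw : V × V, ((if IsCanonTri σ u vw.1 vw.2 then
            degb σ u vw.1 vw.2 + degb σ u vw.2 vw.1 else 0 : ℕ) : ℝ) / k :=
          Finset.sum_le_sum fun vw _ => step vw
      _ = ((∑ vw : V × V, if IsCanonTri σ u vw.1 vw.2 then
            degb σ u vw.1 vw.2 + degb σ u vw.2 vw.1 else 0 : ℕ) : ℝ) / k := by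
          rw [← Finset.sum_div, Nat.cast_sum]
      _ ≤ (2 * m * ΔE : ℝ) / k := by
          gcongr
          exact_mod_cast hnat
  -- the per-triangle bound
  set K : ℝ := p * q ^ 2 * (2 * ΔE) + p * q ^ 4 * (2 * m * ΔE / k) with hKdef
  have hinner : ∀ T : V × V × V, IsCanonTri σ T.1 T.2.1 T.2.2 →
      (∑ T' : V × V × V, c T' * ((∏ i ∈ SS T ∪ SS T', e i) -
        (∏ i ∈ SS T, e i) * ∏ i ∈ SS T', e i)) ≤ K := by
    intro T hcan
    set D : V × V × V → ℝ := fun T' => (∏ i ∈ SS T ∪ SS T', e i) -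
        (∏ i ∈ SS T, e i) * ∏ i ∈ SS T', e i with hDdef
    rw [← Finset.sum_filter_add_sum_filter_not Finset.univ (fun T' : V × V × V => T'.1 = T.1)
      (fun T' => c T' * D T')]
    have hzero : ∑ T' ∈ Finset.univ.filter (fun T' : V × V × V => ¬T'.1 = T.1),
        c T' * D T' = 0 := by
      refine Finset.sum_eq_zero fun T' hT' => ?_
      obtain ⟨-, hne⟩ := Finset.mem_filter.mp hT'
      have hD : D T' = 0 := by
        rw [hDdef]
        simp only
        rw [hD0 T T' (fun hh => hne hh.symm), sub_self]
      rw [hD, mul_zero]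
    rw [hzero, add_zero]
    rw [← Finset.sum_filter_add_sum_filter_not
      (Finset.univ.filter (fun T' : V × V × V => T'.1 = T.1))
      (fun T' : V × V × V => T'.2.1 = T.2.1 ∨ T'.2.1 = T.2.2 ∨ T'.2.2 = T.2.1 ∨ T'.2.2 = T.2.2)
      (fun T' => c T' * D T')]
    have hA : ∑ T' ∈ (Finset.univ.filter (fun T' : V × V × V => T'.1 = T.1)).filter
        (fun T' : V × V × V => T'.2.1 = T.2.1 ∨ T'.2.1 = T.2.2 ∨ T'.2.2 = T.2.1 ∨
          T'.2.2 = T.2.2), c T' * D T' ≤ p * q ^ 2 * (2 * ΔE) := by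
      rw [← Finset.sum_filter_add_sum_filter_not
        ((Finset.univ.filter (fun T' : V × V × V => T'.1 = T.1)).filter
          (fun T' : V × V × V => T'.2.1 = T.2.1 ∨ T'.2.1 = T.2.2 ∨ T'.2.2 = T.2.1 ∨
            T'.2.2 = T.2.2))
        (fun T' : V × V × V => IsCanonTri σ T'.1 T'.2.1 T'.2.2)
        (fun T' => c T' * D T')]
      have hz : ∑ T' ∈ (((Finset.univ.filter (fun T' : V × V × V => T'.1 = T.1)).filter
          (fun T' : V × V × V => T'.2.1 = T.2.1 ∨ T'.2.1 = T.2.2 ∨ T'.2.2 = T.2.1 ∨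
            T'.2.2 = T.2.2)).filter
          (fun T' : V × V × V => ¬IsCanonTri σ T'.1 T'.2.1 T'.2.2)), c T' * D T' = 0 := by
        refine Finset.sum_eq_zero fun T' hT' => ?_
        rw [hcn T' (Finset.mem_filter.mp hT').2, zero_mul]
      rw [hz, add_zero]
      refine le_trans (Finset.sum_le_card_nsmul _ _ (p * q ^ 2) ?_) ?_
      · intro T' hT'
        obtain ⟨hT'2, hcanT'⟩ := Finset.mem_filter.mp hT'
        obtain ⟨hT'3, hsh⟩ := Finset.mem_filter.mp hT'2
        obtain ⟨-, h1⟩ := Finset.mem_filter.mp hT'3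
        have hD2 : D T' ≤ p * q ^ 2 := hDle2 T T' h1.symm hcan
        calc c T' * D T' ≤ c T' * (p * q ^ 2) := mul_le_mul_of_nonneg_left hD2 (hc0 T')
          _ ≤ 1 * (p * q ^ 2) := mul_le_mul_of_nonneg_right (hc1 T') (by positivity)
          _ = p * q ^ 2 := one_mul _
      · rw [nsmul_eq_mul]
        have hcard : (((Finset.univ.filter (fun T' : V × V × V => T'.1 = T.1)).filter
            (fun T' : V × V × V => T'.2.1 = T.2.1 ∨ T'.2.1 = T.2.2 ∨ T'.2.2 = T.2.1 ∨
              T'.2.2 = T.2.2)).filter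
            (fun T' : V × V × V => IsCanonTri σ T'.1 T'.2.1 T'.2.2)).card ≤ 2 * ΔE := by
          refine le_trans (Finset.card_le_card_of_injOn (fun T' => T'.2) ?_ ?_)
            (my_countC1 hinj hsimple hΔE hcan)
          · intro T' hT'
            obtain ⟨hT'2, hcanT'⟩ := Finset.mem_filter.mp hT'
            obtain ⟨hT'3, hsh⟩ := Finset.mem_filter.mp hT'2
            obtain ⟨-, h1⟩ := Finset.mem_filter.mp hT'3
            refine Finset.mem_filter.mpr ⟨Finset.mem_univ _, ?_, hsh⟩
            rw [← h1]; exact hcanT'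
          · rintro ⟨a, vw⟩ ha ⟨a', vw'⟩ ha' hvv
            rw [Finset.mem_coe, Finset.mem_filter] at ha ha'
            have h1 := (Finset.mem_filter.mp (Finset.mem_filter.mp ha.1).1).2
            have h1' := (Finset.mem_filter.mp (Finset.mem_filter.mp ha'.1).1).2
            simp only at h1 h1' hvv
            exact Prod.ext (h1.trans h1'.symm) hvv
        calc (((Finset.univ.filter (fun T' : V × V × V => T'.1 = T.1)).filter
            (fun T' : V × V × V => T'.2.1 = T.2.1 ∨ T'.2.1 = T.2.2 ∨ T'.2.2 = T.2.1 ∨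
              T'.2.2 = T.2.2)).filter
            (fun T' : V × V × V => IsCanonTri σ T'.1 T'.2.1 T'.2.2)).card * (p * q ^ 2)
            ≤ (2 * ΔE : ℝ) * (p * q ^ 2) := by
              refine mul_le_mul_of_nonneg_right ?_ (by positivity)
              exact_mod_cast hcard
          _ = p * q ^ 2 * (2 * ΔE) := by ring
    have hB : ∑ T' ∈ (Finset.univ.filter (fun T' : V × V × V => T'.1 = T.1)).filter
        (fun T' : V × V × V => ¬(T'.2.1 = T.2.1 ∨ T'.2.1 = T.2.2 ∨ T'.2.2 = T.2.1 ∨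
          T'.2.2 = T.2.2)), c T' * D T' ≤ p * q ^ 4 * (2 * m * ΔE / k) := by
      have hstep : ∀ T' ∈ (Finset.univ.filter (fun T' : V × V × V => T'.1 = T.1)).filter
          (fun T' : V × V × V => ¬(T'.2.1 = T.2.1 ∨ T'.2.1 = T.2.2 ∨ T'.2.2 = T.2.1 ∨
            T'.2.2 = T.2.2)), c T' * D T' ≤ c T' * (p * q ^ 4) := by
        intro T' hT'
        obtain ⟨hT'2, hnsh⟩ := Finset.mem_filter.mp hT'
        obtain ⟨-, h1⟩ := Finset.mem_filter.mp hT'2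
        by_cases hcanT' : IsCanonTri σ T'.1 T'.2.1 T'.2.2
        · exact mul_le_mul_of_nonneg_left (hDle4 T T' h1.symm hcan hcanT' hnsh) (hc0 T')
        · rw [hcn T' hcanT', zero_mul, zero_mul]
      refine le_trans (Finset.sum_le_sum hstep) ?_
      rw [← Finset.sum_mul]
      have hsub : (∑ T' ∈ (Finset.univ.filter (fun T' : V × V × V => T'.1 = T.1)).filter
          (fun T' : V × V × V => ¬(T'.2.1 = T.2.1 ∨ T'.2.1 = T.2.2 ∨ T'.2.2 = T.2.1 ∨
            T'.2.2 = T.2.2)), c T') ≤ ∑ vw : V × V, tgt σ k T.1 vw.1 vw.2 := by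
        refine le_trans (Finset.sum_le_sum_of_subset_of_nonneg (Finset.filter_subset _ _)
          fun i _ _ => hc0 i) (le_of_eq ?_)
        rw [Finset.sum_filter, Fintype.sum_prod_type, Finset.sum_comm]
        refine Finset.sum_congr rfl fun vw _ => ?_
        rw [Finset.sum_ite_eq' Finset.univ T.1 (fun a => c (a, vw))]
        simp [hcdef]
      calc (∑ T' ∈ (Finset.univ.filter (fun T' : V × V × V => T'.1 = T.1)).filter
          (fun T' : V × V × V => ¬(T'.2.1 = T.2.1 ∨ T'.2.1 = T.2.2 ∨ T'.2.2 = T.2.1 ∨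
            T'.2.2 = T.2.2)), c T') * (p * q ^ 4)
            ≤ (∑ vw : V × V, tgt σ k T.1 vw.1 vw.2) * (p * q ^ 4) :=
              mul_le_mul_of_nonneg_right hsub (by positivity)
        _ ≤ (2 * m * ΔE / k) * (p * q ^ 4) :=
              mul_le_mul_of_nonneg_right (hTu T.1) (by positivity)
        _ = p * q ^ 4 * (2 * m * ΔE / k) := mul_comm _ _
    rw [hKdef]
    exact add_le_add hA hB
  -- assemble
  have hK0 : 0 ≤ K := by
    rw [hKdef]
    have : (0:ℝ) ≤ (m:ℝ) := hm'.le
    positivity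
  have hper : ∀ T ∈ (Finset.univ : Finset (V × V × V)),
      (∑ T' : V × V × V, (c T * c T' * ∏ i ∈ SS T ∪ SS T', e i -
        (c T * ∏ i ∈ SS T, e i) * (c T' * ∏ i ∈ SS T', e i))) ≤ c T * K := by
    intro T _
    have hre : ∀ T' : V × V × V, c T * c T' * ∏ i ∈ SS T ∪ SS T', e i -
        (c T * ∏ i ∈ SS T, e i) * (c T' * ∏ i ∈ SS T', e i)
        = c T * (c T' * ((∏ i ∈ SS T ∪ SS T', e i) - (∏ i ∈ SS T, e i) * ∏ i ∈ SS T', e i)) :=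
      fun T' => by ring
    simp only [hre]
    rw [← Finset.mul_sum]
    by_cases hcanT : IsCanonTri σ T.1 T.2.1 T.2.2
    · exact mul_le_mul_of_nonneg_left (hinner T hcanT) (hc0 T)
    · rw [hcn T hcanT]
      simp
  refine le_trans (Finset.sum_le_sum hper) ?_
  rw [← Finset.sum_mul]
  have hsum_c : ∑ T : V × V × V, c T = ∑ u : V, ∑ v : V, ∑ w : V, tgt σ k u v w := by
    rw [Fintype.sum_prod_type]
    exact Finset.sum_congr rfl fun u _ => by rw [Fintype.sum_prod_type]
  have hkne : k ≠ 0 := ne_of_gt hk0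
  have hmne : (m : ℝ) ≠ 0 := ne_of_gt hm'
  have hcoef : p * q ^ 2 = Real.sqrt k / (m : ℝ) ^ (3 / 2 : ℝ) := by
    have h32 : (m : ℝ) ^ (3 / 2 : ℝ) = Real.sqrt m ^ 3 := by
      rw [show (3 / 2 : ℝ) = (1 / 2) * (3 : ℕ) by norm_num, Real.rpow_mul hm'.le,
        Real.rpow_natCast, ← Real.sqrt_eq_rpow]
    have hsm : (0 : ℝ) < Real.sqrt m := Real.sqrt_pos.mpr hm'
    have hsk : (0 : ℝ) < Real.sqrt k := Real.sqrt_pos.mpr hk0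
    have h1 : Real.sqrt k ^ 2 = k := Real.sq_sqrt hk0.le
    have h2 : Real.sqrt m ^ 2 = m := Real.sq_sqrt hm'.le
    rw [hp, hq2, h32, Real.sqrt_mul hk0.le]
    set a := Real.sqrt k with ha
    set b := Real.sqrt m with hb
    rw [← h1, ← h2]
    field_simp
  have hKval : K = 4 * (Real.sqrt k / (m : ℝ) ^ (3 / 2 : ℝ)) * ΔE := by
    have hq4 : q ^ 4 = (k / m) ^ 2 := by
      rw [show (4 : ℕ) = 2 * 2 from rfl, pow_mul, hq2]
    rw [hKdef, ← hcoef, hq4, hq2]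
    field_simp
    ring
  rw [hsum_c, hKval]
  rw [mul_comm]
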